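/- With c10a = Sa/z1 and φ0a = V·(log Sa − log R)/D, the zeroth-order solution satisfies the flux relation on the left subinterval [0,a]: ((L/z1 − c10a)/(α·H1)) · (1 + z1·(V − φ0a)/(log(L/z1) − log c10a)) = (L−R)·(z1·V + D)/(z1·H1·D), i.e. it equals J10 of Proposition 3.1. -/

import Mathlib

theorem stmt0 (z1 z2 V L R H1 α β : ℝ)
    (hz1 : 0 < z1) (hz2 : z2 < 0) (hL : 0 < L) (hR : 0 < R) (hLR : L ≠ R)
    (hH1 : 0 < H1) (hα : 0 < α) (hαβ : α < β) (hβ : β < 1)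
    (D Sa c10a φ0a J10 : ℝ)
    (hD : D = Real.log L - Real.log R)
    (hSa : Sa = (1 - α) * L + α * R)
    (hc : c10a = Sa / z1)
    (hφ : φ0a = V * (Real.log Sa - Real.log R) / D)
    (hJ : J10 = (L - R) * (z1 * V + D) / (z1 * H1 * D)) :
    (L / z1 - c10a) / (α * H1) *
      (1 + z1 * (V - φ0a) / (Real.log (L / z1) - Real.log c10a)) = J10 := by
  have hα1 : α < 1 := hαβ.trans hβ
  have hSapos : 0 < Sa := by
    nlinarith
  have hDne : D ≠ 0 := by
    rw [hD]
    rcases lt_or_gt_of_ne hLR with h | h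
    · exact ne_of_lt (sub_neg.mpr (Real.log_lt_log hL h))
    · exact ne_of_gt (sub_pos.mpr (Real.log_lt_log hR h))
  have hLSa : L ≠ Sa := by
    rw [hSa]
    rcases lt_or_gt_of_ne hLR with h | h
    · nlinarith
    · nlinarith
  have hne2 : Real.log L - Real.log Sa ≠ 0 := by
    rcases lt_or_gt_of_ne hLSa with h | h
    · exact ne_of_lt (sub_neg.mpr (Real.log_lt_log hL h))
    · exact ne_of_gt (sub_pos.mpr (Real.log_lt_log hSapos h))
  have h1 : Real.log (L / z1) = Real.log L - Real.log z1 :=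
    Real.log_div hL.ne' hz1.ne'
  have h2 : Real.log c10a = Real.log Sa - Real.log z1 := by
    rw [hc]; exact Real.log_div hSapos.ne' hz1.ne'
  have key : Real.log (L / z1) - Real.log c10a = Real.log L - Real.log Sa := by
    rw [h1, h2]; ring
  subst hc hφ hJ hD hSa
  rw [key]
  generalize Real.log ((1 - α) * L + α * R) = s at hne2 ⊢
  field_simp
  ring
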